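/- arXiv:1710.03850 — 2 statements merged into one kernel-verified Lean document; each statement's English description precedes it below -/
import Mathlib

section
/- Spark lower bound via coherence: for a matrix Q with unit-norm columns and mutual coherence M > 0, every nonzero vector v in the null space of Q satisfies ‖v‖₀ ≥ 1 + 1/M. -/
open scoped RealInnerProductSpace

noncomputable def matCol {d k : ℕ} (Q : Matrix (Fin d) (Fin k) ℝ) (j : Fin k) :
    EuclideanSpace ℝ (Fin d) := WithLp.toLp 2 (fun i => Q i j)

noncomputable def mutualCoherenceU {d k : ℕ} (Q : Matrix (Fin d) (Fin k) ℝ) : ℝ :=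
  sSup {x : ℝ | ∃ i j : Fin k, i ≠ j ∧ x = |⟪matCol Q i, matCol Q j⟫|}

noncomputable def l0norm {k : ℕ} (v : Fin k → ℝ) : ℕ := (Finset.univ.filter fun j => v j ≠ 0).card

theorem spark_lower_bound {d k : ℕ} (Q : Matrix (Fin d) (Fin k) ℝ)
    (hunit : ∀ j, ‖matCol Q j‖ = 1) (hM : 0 < mutualCoherenceU Q)
    (v : Fin k → ℝ) (hv : v ≠ 0) (hnull : Q.mulVec v = 0) :
    1 + 1 / mutualCoherenceU Q ≤ (l0norm v : ℝ) := by
  set M := mutualCoherenceU Q with hMdef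
  set S := Finset.univ.filter (fun j => v j ≠ 0) with hS
  have hSne : S.Nonempty := by
    obtain ⟨j, hj⟩ := Function.ne_iff.mp hv
    exact ⟨j, Finset.mem_filter.mpr ⟨Finset.mem_univ j, by simpa using hj⟩⟩
  obtain ⟨i, hiS, hmax⟩ := S.exists_max_image (fun j => |v j|) hSne
  have hvi : v i ≠ 0 := by simpa [hS] using hiS
  have hvipos : 0 < |v i| := abs_pos.mpr hvi
  have hbdd : BddAbove {x : ℝ | ∃ a b : Fin k, a ≠ b ∧ x = |⟪matCol Q a, matCol Q b⟫|} := by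
    refine ⟨1, ?_⟩
    rintro x ⟨a, b, hab, rfl⟩
    calc |⟪matCol Q a, matCol Q b⟫| ≤ ‖matCol Q a‖ * ‖matCol Q b‖ := abs_real_inner_le_norm _ _
    _ = 1 := by rw [hunit, hunit]; ring
  have hcoh : ∀ a b : Fin k, a ≠ b → |⟪matCol Q a, matCol Q b⟫| ≤ M :=
    fun a b hab => le_csSup hbdd ⟨a, b, hab, rfl⟩
  have hinner : ∀ a b : Fin k, ⟪matCol Q a, matCol Q b⟫ = ∑ r, Q r a * Q r b := by
    intro a b
    simp [matCol, PiLp.inner_apply, RCLike.inner_apply, mul_comm]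
  have hnull' : ∀ r, ∑ j, Q r j * v j = 0 := by
    intro r
    have := congrFun hnull r
    simpa [Matrix.mulVec, dotProduct] using this
  have hsum : ∑ j, v j * ⟪matCol Q i, matCol Q j⟫ = 0 := by
    simp_rw [hinner, Finset.mul_sum]
    rw [Finset.sum_comm]
    have : ∀ r, ∑ j, v j * (Q r i * Q r j) = Q r i * ∑ j, Q r j * v j := by
      intro r; rw [Finset.mul_sum]; apply Finset.sum_congr rfl; intros; ring
    simp_rw [this, hnull']
    simp
  have hii : ⟪matCol Q i, matCol Q i⟫ = 1 := by
    rw [real_inner_self_eq_norm_mul_norm, hunit]; ring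
  have hsplit : v i + ∑ j ∈ Finset.univ.erase i, v j * ⟪matCol Q i, matCol Q j⟫ = 0 := by
    rw [← hsum, ← Finset.add_sum_erase _ _ (Finset.mem_univ i), hii, mul_one]
  have hvi_eq : |v i| = |∑ j ∈ Finset.univ.erase i, v j * ⟪matCol Q i, matCol Q j⟫| := by
    have : v i = -∑ j ∈ Finset.univ.erase i, v j * ⟪matCol Q i, matCol Q j⟫ := by
      linarith
    rw [this, abs_neg]
  -- restrict the sum to S.erase i (terms with v j = 0 vanish)
  have hsum_restrict : ∑ j ∈ Finset.univ.erase i, v j * ⟪matCol Q i, matCol Q j⟫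
      = ∑ j ∈ S.erase i, v j * ⟪matCol Q i, matCol Q j⟫ := by
    apply (Finset.sum_subset ?_ ?_).symm
    · intro j hj
      exact Finset.mem_erase.mpr ⟨(Finset.mem_erase.mp hj).1, Finset.mem_univ j⟩
    · intro j hj hjS
      have : v j = 0 := by
        by_contra hne
        exact hjS (Finset.mem_erase.mpr ⟨(Finset.mem_erase.mp hj).1, by simp [hS, hne]⟩)
      simp [this]
  have hbound : |v i| ≤ ((S.erase i).card : ℝ) * (|v i| * M) := by
    calc |v i| = |∑ j ∈ S.erase i, v j * ⟪matCol Q i, matCol Q j⟫| := by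
          rw [hvi_eq, hsum_restrict]
      _ ≤ ∑ j ∈ S.erase i, |v j * ⟪matCol Q i, matCol Q j⟫| := Finset.abs_sum_le_sum_abs _ _
      _ ≤ ∑ j ∈ S.erase i, |v i| * M := by
          apply Finset.sum_le_sum
          intro j hj
          rw [abs_mul]
          have hji : j ≠ i := (Finset.mem_erase.mp hj).1
          have h1 : |v j| ≤ |v i| := hmax j (Finset.mem_of_mem_erase hj)
          have h2 : |⟪matCol Q i, matCol Q j⟫| ≤ M := hcoh i j (Ne.symm hji)
          have h3 : (0:ℝ) ≤ |⟪matCol Q i, matCol Q j⟫| := abs_nonneg _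
          nlinarith [abs_nonneg (v j)]
      _ = ((S.erase i).card : ℝ) * (|v i| * M) := by
          rw [Finset.sum_const, nsmul_eq_mul]
  have hcard : ((S.erase i).card : ℝ) = (S.card : ℝ) - 1 := by
    rw [Finset.card_erase_of_mem hiS]
    have : 1 ≤ S.card := Finset.card_pos.mpr hSne
    push_cast [Nat.cast_sub this]
    ring
  have hkey : 1 ≤ ((S.card : ℝ) - 1) * M := by
    rw [hcard] at hbound
    nlinarith
  have : 1 / M ≤ (S.card : ℝ) - 1 := by
    rw [div_le_iff₀ hM]
    linarith [hkey]
  have hl0 : (l0norm v : ℝ) = (S.card : ℝ) := by simp [l0norm, hS]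
  rw [hl0]
  linarith
end

section
/- Stability of sparse solutions under low coherence (noisy case, restricted version): let Q have unit-norm columns with coherence M, and suppose s* has support of size K with (4K−1)M < 1. If θ̂ satisfies ‖θ̂ − Q s*‖₂ ≤ ε and s⁺ has ‖s⁺‖₀ ≤ K with ‖θ̂ − Q s⁺‖₂ ≤ ε, then ‖s* − s⁺‖₂² ≤ 4ε² / (1 − M(2K−1)). -/
open scoped RealInnerProductSpace

set_option maxHeartbeats 1000000 in
theorem sparse_stability {d k K : ℕ} (Q : Matrix (Fin d) (Fin k) ℝ)
    (hunit : ∀ j, ‖matCol Q j‖ = 1)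
    (sStar sPlus : Fin k → ℝ) (θhat : Fin d → ℝ) (ε : ℝ) (hε : 0 ≤ ε)
    (hKcond : (4 * (K : ℝ) - 1) * mutualCoherenceU Q < 1)
    (hsStar : l0norm sStar ≤ K) (hsPlus : l0norm sPlus ≤ K)
    (hfit1 : ∑ i, (θhat i - Q.mulVec sStar i) ^ 2 ≤ ε ^ 2)
    (hfit2 : ∑ i, (θhat i - Q.mulVec sPlus i) ^ 2 ≤ ε ^ 2) :
    ∑ j, (sStar j - sPlus j) ^ 2 ≤
      4 * ε ^ 2 / (1 - mutualCoherenceU Q * (2 * (K : ℝ) - 1)) := by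
  classical
  set M := mutualCoherenceU Q with hMdef
  set v : Fin k → ℝ := fun j => sStar j - sPlus j with hv
  -- basic facts about M
  have hbdd : BddAbove {x : ℝ | ∃ i j : Fin k, i ≠ j ∧ x = |⟪matCol Q i, matCol Q j⟫|} := by
    apply Set.Finite.bddAbove
    apply Set.Finite.subset
      (Set.finite_range (fun p : Fin k × Fin k => |⟪matCol Q p.1, matCol Q p.2⟫|))
    rintro x ⟨i, j, -, rfl⟩
    exact ⟨(i, j), rfl⟩
  have hMle : ∀ i j : Fin k, i ≠ j → |⟪matCol Q i, matCol Q j⟫| ≤ M := fun i j hij =>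
    le_csSup hbdd ⟨i, j, hij, rfl⟩
  have hMnn : 0 ≤ M := by
    rcases Set.eq_empty_or_nonempty
        {x : ℝ | ∃ i j : Fin k, i ≠ j ∧ x = |⟪matCol Q i, matCol Q j⟫|} with h | ⟨x, hx⟩
    · rw [hMdef, mutualCoherenceU, h, Real.sSup_empty]
    · obtain ⟨i, j, hij, rfl⟩ := hx
      exact le_trans (abs_nonneg _) (hMle i j hij)
  -- support of v
  set S : Finset (Fin k) := Finset.univ.filter (fun j => v j ≠ 0) with hS
  have hScard : (S.card : ℝ) ≤ 2 * K := by
    have h1 : S ⊆ (Finset.univ.filter fun j => sStar j ≠ 0) ∪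
        (Finset.univ.filter fun j => sPlus j ≠ 0) := by
      intro j hj
      simp only [hS, Finset.mem_filter, Finset.mem_union, Finset.mem_univ, true_and] at hj ⊢
      by_contra hcon
      push_neg at hcon
      exact hj (by simp [hv, hcon.1, hcon.2])
    have := (Finset.card_le_card h1).trans (Finset.card_union_le _ _)
    have h2 : S.card ≤ K + K := this.trans (Nat.add_le_add hsStar hsPlus)
    push_cast
    calc (S.card : ℝ) ≤ (K : ℝ) + K := by exact_mod_cast h2
    _ = 2 * K := by ring
  have hTnn : (0:ℝ) ≤ ∑ j, v j ^ 2 := Finset.sum_nonneg fun j _ => sq_nonneg _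
  -- Gram matrix entries
  have hGram : ∀ i j : Fin k, ⟪matCol Q i, matCol Q j⟫ = ∑ l, Q l i * Q l j := by
    intro i j
    simp [matCol, PiLp.inner_apply, RCLike.inner_apply, mul_comm]
  have hdiag : ∀ j : Fin k, ⟪matCol Q j, matCol Q j⟫ = 1 := by
    intro j
    rw [real_inner_self_eq_norm_sq, hunit j, one_pow]
  -- expansion of ‖Qv‖²
  have hexp : ∑ i, (Q.mulVec v i) ^ 2
      = ∑ j, ∑ l, v j * v l * ⟪matCol Q j, matCol Q l⟫ := by
    simp only [hGram, Matrix.mulVec, dotProduct, sq, Finset.sum_mul_sum]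
    rw [Finset.sum_comm]
    refine Finset.sum_congr rfl fun j _ => ?_
    rw [Finset.sum_comm]
    refine Finset.sum_congr rfl fun l _ => ?_
    rw [Finset.mul_sum]
    exact Finset.sum_congr rfl fun i _ => by ring
  -- split diagonal
  have hsplit : ∑ j, ∑ l, v j * v l * ⟪matCol Q j, matCol Q l⟫
      = ∑ j, v j ^ 2 + ∑ j, ∑ l ∈ Finset.univ.erase j, v j * v l * ⟪matCol Q j, matCol Q l⟫ := by
    rw [← Finset.sum_add_distrib]
    refine Finset.sum_congr rfl fun j _ => ?_
    rw [← Finset.add_sum_erase (h := Finset.mem_univ j), hdiag j, mul_one, ← pow_two]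
  -- off-diagonal lower bound
  have hoff : ∀ j : Fin k, ∀ l ∈ Finset.univ.erase j,
      -(M * (|v j| * |v l|)) ≤ v j * v l * ⟪matCol Q j, matCol Q l⟫ := by
    intro j l hl
    have hlj : l ≠ j := Finset.ne_of_mem_erase hl
    have h1 : |v j * v l * ⟪matCol Q j, matCol Q l⟫| ≤ |v j| * |v l| * M := by
      rw [abs_mul, abs_mul]
      exact mul_le_mul_of_nonneg_left (hMle j l hlj.symm)
        (mul_nonneg (abs_nonneg _) (abs_nonneg _))
    nlinarith [neg_abs_le (v j * v l * ⟪matCol Q j, matCol Q l⟫)]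
  -- cross-term identity
  have hCrossEq : ∑ j, ∑ l ∈ Finset.univ.erase j, |v j| * |v l|
      = (∑ j, |v j|) ^ 2 - ∑ j, v j ^ 2 := by
    have e1 : ∀ j : Fin k, ∑ l ∈ Finset.univ.erase j, |v j| * |v l|
        = |v j| * (∑ l, |v l|) - v j ^ 2 := by
      intro j
      rw [← Finset.mul_sum, Finset.sum_erase_eq_sub (Finset.mem_univ j), mul_sub,
        abs_mul_abs_self, ← pow_two]
    simp_rw [e1]
    rw [Finset.sum_sub_distrib, ← Finset.sum_mul, ← pow_two]
  -- ℓ¹-ℓ² bound via support size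
  have habs : (∑ j, |v j|) ^ 2 ≤ 2 * (K : ℝ) * ∑ j, v j ^ 2 := by
    have e2 : ∑ j, |v j| = ∑ j ∈ S, |v j| := by
      refine (Finset.sum_subset (Finset.subset_univ S) ?_).symm
      intro j _ hj
      simp only [hS, Finset.mem_filter, Finset.mem_univ, true_and, not_not] at hj
      simp [hj]
    have e3 : (∑ j ∈ S, |v j|) ^ 2 ≤ (S.card : ℝ) * ∑ j ∈ S, |v j| ^ 2 := by
      exact_mod_cast sq_sum_le_card_mul_sum_sq (s := S) (f := fun j => |v j|)
    have e4 : ∑ j ∈ S, |v j| ^ 2 ≤ ∑ j, v j ^ 2 := by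
      simp_rw [sq_abs]
      exact Finset.sum_le_sum_of_subset_of_nonneg (Finset.subset_univ S)
        fun j _ _ => sq_nonneg _
    have e5 : (0:ℝ) ≤ (S.card : ℝ) := Nat.cast_nonneg _
    calc (∑ j, |v j|) ^ 2 = (∑ j ∈ S, |v j|) ^ 2 := by rw [e2]
      _ ≤ (S.card : ℝ) * ∑ j ∈ S, |v j| ^ 2 := e3
      _ ≤ (2 * (K : ℝ)) * ∑ j, v j ^ 2 := by
          apply mul_le_mul hScard e4 (Finset.sum_nonneg fun j _ => sq_nonneg _)
          positivity
  -- off-diagonal lower bound (summed)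
  have hOffLB : -(M * ((∑ j, |v j|) ^ 2 - ∑ j, v j ^ 2))
      ≤ ∑ j, ∑ l ∈ Finset.univ.erase j, v j * v l * ⟪matCol Q j, matCol Q l⟫ := by
    rw [← hCrossEq]
    calc -(M * ∑ j, ∑ l ∈ Finset.univ.erase j, |v j| * |v l|)
        = ∑ j, ∑ l ∈ Finset.univ.erase j, -(M * (|v j| * |v l|)) := by
          rw [Finset.mul_sum, ← Finset.sum_neg_distrib]
          exact Finset.sum_congr rfl fun j _ => by
            rw [Finset.mul_sum, ← Finset.sum_neg_distrib]
      _ ≤ _ := Finset.sum_le_sum fun j _ => Finset.sum_le_sum (hoff j)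
  -- upper bound on ‖Qv‖²
  have hab : ∀ i, Q.mulVec v i
      = (θhat i - Q.mulVec sPlus i) - (θhat i - Q.mulVec sStar i) := by
    intro i
    simp only [hv, Matrix.mulVec, dotProduct, mul_sub, Finset.sum_sub_distrib]
    ring
  have hcs := Finset.sum_mul_sq_le_sq_mul_sq Finset.univ
    (fun i => θhat i - Q.mulVec sStar i) (fun i => θhat i - Q.mulVec sPlus i)
  have hQv : ∑ i, (Q.mulVec v i) ^ 2 ≤ 4 * ε ^ 2 := by
    have h2 : ∑ i, (Q.mulVec v i) ^ 2
        = ∑ i, (θhat i - Q.mulVec sPlus i) ^ 2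
          - 2 * ∑ i, (θhat i - Q.mulVec sStar i) * (θhat i - Q.mulVec sPlus i)
          + ∑ i, (θhat i - Q.mulVec sStar i) ^ 2 := by
      rw [Finset.mul_sum, ← Finset.sum_sub_distrib, ← Finset.sum_add_distrib]
      refine Finset.sum_congr rfl fun i _ => ?_
      rw [hab i]; ring
    rw [h2]
    have hna : (0:ℝ) ≤ ∑ i, (θhat i - Q.mulVec sStar i) ^ 2 :=
      Finset.sum_nonneg fun i _ => sq_nonneg _
    have hnb : (0:ℝ) ≤ ∑ i, (θhat i - Q.mulVec sPlus i) ^ 2 :=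
      Finset.sum_nonneg fun i _ => sq_nonneg _
    nlinarith [hcs, hfit1, hfit2, sq_nonneg ε, mul_le_mul hfit1 hfit2 hnb (sq_nonneg ε),
      sq_nonneg ((∑ i, (θhat i - Q.mulVec sStar i) * (θhat i - Q.mulVec sPlus i)) + ε ^ 2)]
  -- combine
  have hdenom : 0 < 1 - M * (2 * (K : ℝ) - 1) := by
    nlinarith [mul_nonneg hMnn (Nat.cast_nonneg K : (0:ℝ) ≤ (K:ℝ))]
  rw [le_div_iff₀ hdenom]
  have hlow : (1 - M * (2 * (K : ℝ) - 1)) * (∑ j, v j ^ 2) ≤ ∑ i, (Q.mulVec v i) ^ 2 := by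
    rw [hexp, hsplit]
    nlinarith [hOffLB, habs, hMnn, hTnn]
  have heq : ∑ j, (sStar j - sPlus j) ^ 2 = ∑ j, v j ^ 2 := rfl
  rw [heq]
  nlinarith [hlow, hQv]
end
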